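/- Let F be a field with char(F) ≠ 2. The two-dimensional algebras with MSCs As₂¹ = (0,0,0,0; 1,0,0,0), As₂² = (1,0,0,0; 0,0,0,0), As₂³ = (1,0,0,0; 0,1,0,0), As₂⁴ = (1/2,0,0,0; 0,0,1/2,0) and As₂⁵(α₄) = (1/2,0,0,α₄; 0,1/2,1/2,0) (for any α₄ ∈ F) are pairwise non-isomorphic: no algebra from one of these five items is isomorphic to an algebra from a different item. -/

import Mathlib

open Matrix Kronecker

/-- Reinterpret a `2 × 4` matrix as an MSC in `M_{2×2²}(F)`, the four columns being
indexed by the pairs `(1,1),(1,2),(2,1),(2,2)` in lexicographic order. -/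
def toMsc2 {F : Type*} [Field F] (M : Matrix (Fin 2) (Fin 4) F) :
    Matrix (Fin 2) (Fin 2 × Fin 2) F :=
  Matrix.of fun i p => M i ⟨(p.2 : ℕ) + 2 * (p.1 : ℕ), by omega⟩

/-- The five items of the classification list of two-dimensional associative algebras:
`As₂¹, As₂², As₂³, As₂⁴` and the family `As₂⁵(α₄)` (the parameter is ignored by
the first four items). -/
def item2 {F : Type*} [Field F] (k : Fin 5) (α₄ : F) :
    Matrix (Fin 2) (Fin 2 × Fin 2) F :=
  ![toMsc2 !![0,0,0,0; 1,0,0,0],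
    toMsc2 !![1,0,0,0; 0,0,0,0],
    toMsc2 !![1,0,0,0; 0,1,0,0],
    toMsc2 !![1/2,0,0,0; 0,0,1/2,0],
    toMsc2 !![1/2,0,0,α₄; 0,1/2,1/2,0]] k

/-- The multiplication attached to an MSC. -/
def mu2 {F : Type*} [Field F] (M : Matrix (Fin 2) (Fin 2 × Fin 2) F) (x y : Fin 2 → F) :
    Fin 2 → F := M *ᵥ fun p => x p.1 * y p.2

section transfer
variable {F : Type*} [Field F] {g : Matrix (Fin 2) (Fin 2) F}
  {A B : Matrix (Fin 2) (Fin 2 × Fin 2) F}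

theorem mu2_transfer (h : g * B = A * (g ⊗ₖ g)) (x y : Fin 2 → F) :
    g *ᵥ mu2 B x y = mu2 A (g *ᵥ x) (g *ᵥ y) := by
  unfold mu2
  rw [Matrix.mulVec_mulVec, h, ← Matrix.mulVec_mulVec]
  congr 1
  funext p
  simp only [Matrix.mulVec, dotProduct, Fintype.sum_prod_type, Fin.sum_univ_two,
    Matrix.kroneckerMap_apply]
  ring

theorem comm_fwd (hsurj : ∀ v : Fin 2 → F, ∃ x, g *ᵥ x = v)
    (htr : ∀ x y : Fin 2 → F, g *ᵥ mu2 B x y = mu2 A (g *ᵥ x) (g *ᵥ y))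
    (hB : ∀ x y, mu2 B x y = mu2 B y x) (u v : Fin 2 → F) :
    mu2 A u v = mu2 A v u := by
  obtain ⟨x, rfl⟩ := hsurj u; obtain ⟨y, rfl⟩ := hsurj v
  rw [← htr, ← htr, hB]

theorem comm_bwd (hinj : ∀ v w : Fin 2 → F, g *ᵥ v = g *ᵥ w → v = w)
    (htr : ∀ x y : Fin 2 → F, g *ᵥ mu2 B x y = mu2 A (g *ᵥ x) (g *ᵥ y))
    (hA : ∀ u v, mu2 A u v = mu2 A v u) (x y : Fin 2 → F) :
    mu2 B x y = mu2 B y x :=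
  hinj _ _ (by rw [htr, htr, hA])

theorem id_fwd (hsurj : ∀ v : Fin 2 → F, ∃ x, g *ᵥ x = v)
    (htr : ∀ x y : Fin 2 → F, g *ᵥ mu2 B x y = mu2 A (g *ᵥ x) (g *ᵥ y))
    (hB : ∃ e, ∀ y, mu2 B e y = y) : ∃ e, ∀ v, mu2 A e v = v := by
  obtain ⟨e, hB⟩ := hB
  exact ⟨g *ᵥ e, fun v => by obtain ⟨y, rfl⟩ := hsurj v; rw [← htr, hB]⟩

theorem id_bwd (hinj : ∀ v w : Fin 2 → F, g *ᵥ v = g *ᵥ w → v = w)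
    (hsurj : ∀ v : Fin 2 → F, ∃ x, g *ᵥ x = v)
    (htr : ∀ x y : Fin 2 → F, g *ᵥ mu2 B x y = mu2 A (g *ᵥ x) (g *ᵥ y))
    (hA : ∃ e, ∀ v, mu2 A e v = v) : ∃ e, ∀ y, mu2 B e y = y := by
  obtain ⟨e, hA⟩ := hA
  obtain ⟨e', rfl⟩ := hsurj e
  exact ⟨e', fun y => hinj _ _ (by rw [htr, hA])⟩

theorem nil_fwd (hsurj : ∀ v : Fin 2 → F, ∃ x, g *ᵥ x = v)
    (htr : ∀ x y : Fin 2 → F, g *ᵥ mu2 B x y = mu2 A (g *ᵥ x) (g *ᵥ y))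
    (hB : ∀ x y z, mu2 B x (mu2 B y z) = 0) (u v w : Fin 2 → F) :
    mu2 A u (mu2 A v w) = 0 := by
  obtain ⟨x, rfl⟩ := hsurj u; obtain ⟨y, rfl⟩ := hsurj v; obtain ⟨z, rfl⟩ := hsurj w
  rw [← htr, ← htr, hB, Matrix.mulVec_zero]

theorem nil_bwd (hinj : ∀ v w : Fin 2 → F, g *ᵥ v = g *ᵥ w → v = w)
    (htr : ∀ x y : Fin 2 → F, g *ᵥ mu2 B x y = mu2 A (g *ᵥ x) (g *ᵥ y))
    (hA : ∀ u v w, mu2 A u (mu2 A v w) = 0) (x y z : Fin 2 → F) :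
    mu2 B x (mu2 B y z) = 0 := by
  apply hinj
  rw [htr, htr, hA, Matrix.mulVec_zero]

end transfer

section concrete
variable {F : Type*} [Field F] (α : F) (x y : Fin 2 → F)

theorem mu_0 : mu2 (item2 0 α) x y = ![0, x 0 * y 0] := by
  funext i
  fin_cases i <;>
    simp [mu2, item2, toMsc2, Matrix.mulVec, dotProduct, Fintype.sum_prod_type, Fin.sum_univ_two]

theorem mu_1 : mu2 (item2 1 α) x y = ![x 0 * y 0, 0] := by
  funext i
  fin_cases i <;>
    simp [mu2, item2, toMsc2, Matrix.mulVec, dotProduct, Fintype.sum_prod_type, Fin.sum_univ_two]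

theorem mu_2 : mu2 (item2 2 α) x y = ![x 0 * y 0, x 0 * y 1] := by
  funext i
  fin_cases i <;>
    simp [mu2, item2, toMsc2, Matrix.mulVec, dotProduct, Fintype.sum_prod_type, Fin.sum_univ_two]

theorem mu_3 : mu2 (item2 3 α) x y = ![x 0 * y 0 / 2, x 1 * y 0 / 2] := by
  funext i
  fin_cases i <;>
    · simp [mu2, item2, toMsc2, Matrix.mulVec, dotProduct, Fintype.sum_prod_type,
        Fin.sum_univ_two]
      try ring

theorem mu_4 : mu2 (item2 4 α) x y = ![x 0 * y 0 / 2 + α * (x 1 * y 1),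
    x 0 * y 1 / 2 + x 1 * y 0 / 2] := by
  funext i
  fin_cases i <;>
    · simp [mu2, item2, toMsc2, Matrix.mulVec, dotProduct, Fintype.sum_prod_type,
        Fin.sum_univ_two]
      try ring

theorem comm_0 : mu2 (item2 0 α) x y = mu2 (item2 0 α) y x := by
  rw [mu_0, mu_0, mul_comm]

theorem comm_1 : mu2 (item2 1 α) x y = mu2 (item2 1 α) y x := by
  rw [mu_1, mu_1, mul_comm]

theorem comm_4 : mu2 (item2 4 α) x y = mu2 (item2 4 α) y x := by
  rw [mu_4, mu_4]
  congr 1 <;> ring_nf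

theorem id_2 : ∃ e, ∀ v : Fin 2 → F, mu2 (item2 2 α) e v = v := by
  refine ⟨![1, 0], fun v => ?_⟩
  rw [mu_2]
  funext i
  fin_cases i <;> simp

theorem id_4 (hchar : (2 : F) ≠ 0) : ∃ e, ∀ v : Fin 2 → F, mu2 (item2 4 α) e v = v := by
  refine ⟨![2, 0], fun v => ?_⟩
  rw [mu_4]
  funext i
  fin_cases i <;>
    · simp
      field_simp
      try ring

theorem nil_0 (z : Fin 2 → F) : mu2 (item2 0 α) x (mu2 (item2 0 α) y z) = 0 := by
  rw [mu_0, mu_0]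
  funext i
  fin_cases i <;> simp

theorem not_comm_2 (h : ∀ x y : Fin 2 → F, mu2 (item2 2 α) x y = mu2 (item2 2 α) y x) :
    False := by
  have h1 := congrFun (h ![1, 0] ![0, 1]) 1
  rw [mu_2, mu_2] at h1
  simp at h1

theorem not_comm_3 (hchar : (2 : F) ≠ 0)
    (h : ∀ x y : Fin 2 → F, mu2 (item2 3 α) x y = mu2 (item2 3 α) y x) : False := by
  have h1 := congrFun (h ![0, 1] ![1, 0]) 1
  rw [mu_3, mu_3] at h1
  simp [div_eq_zero_iff, hchar] at h1

theorem not_id_0 (h : ∃ e, ∀ v : Fin 2 → F, mu2 (item2 0 α) e v = v) : False := by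
  obtain ⟨e, h⟩ := h
  have h1 := congrFun (h ![1, 0]) 0
  rw [mu_0] at h1
  simp at h1

theorem not_id_1 (h : ∃ e, ∀ v : Fin 2 → F, mu2 (item2 1 α) e v = v) : False := by
  obtain ⟨e, h⟩ := h
  have h1 := congrFun (h ![0, 1]) 1
  rw [mu_1] at h1
  simp at h1

theorem not_id_3 (h : ∃ e, ∀ v : Fin 2 → F, mu2 (item2 3 α) e v = v) : False := by
  obtain ⟨e, h⟩ := h
  have h1 := congrFun (h ![0, 1]) 1
  rw [mu_3] at h1
  simp at h1

theorem not_nil_1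
    (h : ∀ x y z : Fin 2 → F, mu2 (item2 1 α) x (mu2 (item2 1 α) y z) = 0) : False := by
  have h1 := congrFun (h ![1, 0] ![1, 0] ![1, 0]) 0
  rw [mu_1, mu_1] at h1
  simp at h1

end concrete

theorem two_dim_list_pairwise_nonisomorphic {F : Type*} [Field F] (hchar : (2 : F) ≠ 0)
    (k l : Fin 5) (α β : F) (hkl : k ≠ l) :
    ¬ ∃ g : Matrix (Fin 2) (Fin 2) F, IsUnit g ∧
        g * item2 l β = item2 k α * (g ⊗ₖ g) := by
  rintro ⟨g, hg, he⟩
  have hdet : IsUnit g.det := (Matrix.isUnit_iff_isUnit_det g).mp hg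
  have hsurj : ∀ v : Fin 2 → F, ∃ x, g *ᵥ x = v := fun v =>
    ⟨g⁻¹ *ᵥ v, by rw [Matrix.mulVec_mulVec, Matrix.mul_nonsing_inv g hdet, Matrix.one_mulVec]⟩
  have hinj : ∀ v w : Fin 2 → F, g *ᵥ v = g *ᵥ w → v = w := fun v w h => by
    have h2 := congrArg (fun u => g⁻¹ *ᵥ u) h
    simpa only [Matrix.mulVec_mulVec, Matrix.nonsing_inv_mul g hdet, Matrix.one_mulVec] using h2
  have htr := mu2_transfer he
  fin_cases k <;> fin_cases l
  · exact hkl rfl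
  · exact not_nil_1 β (nil_bwd hinj htr (nil_0 α))
  · exact not_comm_2 β (comm_bwd hinj htr (comm_0 α))
  · exact not_comm_3 β hchar (comm_bwd hinj htr (comm_0 α))
  · exact not_id_0 α (id_fwd hsurj htr (id_4 β hchar))
  · exact not_nil_1 α (nil_fwd hsurj htr (nil_0 β))
  · exact hkl rfl
  · exact not_comm_2 β (comm_bwd hinj htr (comm_1 α))
  · exact not_comm_3 β hchar (comm_bwd hinj htr (comm_1 α))
  · exact not_id_1 α (id_fwd hsurj htr (id_4 β hchar))
  · exact not_comm_2 α (comm_fwd hsurj htr (comm_0 β))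
  · exact not_comm_2 α (comm_fwd hsurj htr (comm_1 β))
  · exact hkl rfl
  · exact not_id_3 β (id_bwd hinj hsurj htr (id_2 α))
  · exact not_comm_2 α (comm_fwd hsurj htr (comm_4 β))
  · exact not_comm_3 α hchar (comm_fwd hsurj htr (comm_0 β))
  · exact not_comm_3 α hchar (comm_fwd hsurj htr (comm_1 β))
  · exact not_id_3 α (id_fwd hsurj htr (id_2 β))
  · exact hkl rfl
  · exact not_comm_3 α hchar (comm_fwd hsurj htr (comm_4 β))
  · exact not_id_0 β (id_bwd hinj hsurj htr (id_4 α hchar))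
  · exact not_id_1 β (id_bwd hinj hsurj htr (id_4 α hchar))
  · exact not_comm_2 β (comm_bwd hinj htr (comm_4 α))
  · exact not_comm_3 β hchar (comm_bwd hinj htr (comm_4 α))
  · exact hkl rfl
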